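/- Let c be an edge-coloring of K_n and L a representing graph of c (one edge per color). Suppose L contains a complete p-partite subgraph with parts B_1,…,B_p of size 2v each, and additionally a matching M_{2k} of k edges inside B_1, where v is at least the number of vertices of every graph in a family 𝔉 and some F ∈ 𝔉 satisfies F ⊆ T(vp,p; M_{2k−2}, M_2). If x,y are two vertices in B_2 with xy colored c(xy), then the graph obtained from L by removing the edge of color c(xy) and adding the edge xy contains T(vp,p; M_{2k−2}, M_2), and hence K_n contains a rainbow copy of F. -/

import Mathlib

open SimpleGraph

universe u v

/-- `F` embeds into `G` as a subgraph (injective graph homomorphism). -/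
def Embeds {α : Type u} {β : Type v} (F : SimpleGraph α) (G : SimpleGraph β) : Prop :=
  ∃ f : α ↪ β, ∀ a b, F.Adj a b → G.Adj (f a) (f b)

/-- Join of two graphs: all cross edges added. -/
def join {α β : Type*} (G : SimpleGraph α) (H : SimpleGraph β) : SimpleGraph (α ⊕ β) where
  Adj x y :=
    match x, y with
    | Sum.inl a, Sum.inl b => G.Adj a b
    | Sum.inr a, Sum.inr b => H.Adj a b
    | Sum.inl _, Sum.inr _ => True
    | Sum.inr _, Sum.inl _ => True
  symm := ⟨by
    rintro (a | a) (b | b) h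
    · exact G.adj_symm h
    · trivial
    · trivial
    · exact H.adj_symm h⟩
  loopless := ⟨by
    rintro (a | a) h
    · exact G.ne_of_adj h rfl
    · exact H.ne_of_adj h rfl⟩

/-- Disjoint union of two graphs. -/
def dUnion {α β : Type*} (G : SimpleGraph α) (H : SimpleGraph β) : SimpleGraph (α ⊕ β) where
  Adj x y :=
    match x, y with
    | Sum.inl a, Sum.inl b => G.Adj a b
    | Sum.inr a, Sum.inr b => H.Adj a b
    | Sum.inl _, Sum.inr _ => False
    | Sum.inr _, Sum.inl _ => False
  symm := ⟨by
    rintro (a | a) (b | b) h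
    · exact G.adj_symm h
    · exact h.elim
    · exact h.elim
    · exact H.adj_symm h⟩
  loopless := ⟨by
    rintro (a | a) h
    · exact G.ne_of_adj h rfl
    · exact H.ne_of_adj h rfl⟩

/-- The star `S_{k+1}` on `k+1` vertices, with center `0`. -/
def starG (k : ℕ) : SimpleGraph (Fin (k + 1)) :=
  SimpleGraph.fromRel (fun i _ => i = 0)

/-- The matching `M_{2k}` consisting of `k` disjoint edges on `2k` vertices. -/
def matchingG (k : ℕ) : SimpleGraph (Fin (2 * k)) :=
  SimpleGraph.fromRel (fun i j => (i : ℕ) / 2 = (j : ℕ) / 2)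

/-- `Q(p,k) = K₁ ∨ T(pk,p)`. -/
def Q (p k : ℕ) : SimpleGraph (Unit ⊕ Fin (p * k)) :=
  join (⊤ : SimpleGraph Unit) (SimpleGraph.turanGraph (p * k) p)

/-- Number of edges of a graph. -/
noncomputable def eCount {α : Type*} (G : SimpleGraph α) : ℕ := Nat.card G.edgeSet

/-- `t(n,p)`, the number of edges of the Turán graph `T(n,p)`. -/
noncomputable def tur (n p : ℕ) : ℕ := eCount (SimpleGraph.turanGraph n p)

/-- Degree of a vertex, instance-free. -/
noncomputable def ndeg {α : Type*} (G : SimpleGraph α) (v : α) : ℕ := Nat.card (G.neighborSet v)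

/-- An edge-coloring `c` of `K_n` admits a rainbow copy of `F`. -/
def HasRainbow {n : ℕ} {β : Type*} (c : Sym2 (Fin n) → ℕ) (F : SimpleGraph β) : Prop :=
  ∃ f : β ↪ Fin n, ∀ a b a' b', F.Adj a b → F.Adj a' b' →
    c s(f a, f b) = c s(f a', f b') → s(a, b) = s(a', b')

/-- Number of colors used on the edges of `K_n` by the coloring `c`. -/
noncomputable def colorsUsed (n : ℕ) (c : Sym2 (Fin n) → ℕ) : ℕ :=
  Nat.card (c '' (⊤ : SimpleGraph (Fin n)).edgeSet)

/-- The Turán graph `T(vp,p)` with a matching of `k-1` edges added inside the part `0`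
and one extra edge added inside the part `1`. -/
def turanMM (w p k : ℕ) : SimpleGraph (Fin (w * p)) :=
  SimpleGraph.fromRel (fun i j =>
    ((i : ℕ) % p ≠ (j : ℕ) % p)
    ∨ ((i : ℕ) % p = 0 ∧ (j : ℕ) % p = 0 ∧ (i : ℕ) / p / 2 = (j : ℕ) / p / 2 ∧
        (i : ℕ) / p < 2 * (k - 1))
    ∨ ((i : ℕ) % p = 1 ∧ (j : ℕ) % p = 1 ∧ (i : ℕ) / p < 2 ∧ (j : ℕ) / p < 2))

lemma exists_fill {n : ℕ} (z : Fin n) (s : Finset (Fin n)) (m : ℕ) (h : m ≤ s.card) :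
    ∃ g : ℕ → Fin n, (∀ t, t < m → g t ∈ s) ∧
      ∀ t₁ t₂, t₁ < m → t₂ < m → g t₁ = g t₂ → t₁ = t₂ := by
  obtain ⟨u, hus, huc⟩ := Finset.exists_subset_card_eq h
  have e := u.equivFin
  refine ⟨fun t => if ht : t < m then (e.symm ⟨t, huc ▸ ht⟩ : Fin n) else z, ?_, ?_⟩
  · intro t ht
    simp only [dif_pos ht]
    exact hus (e.symm _).2
  · intro t₁ t₂ h1 h2 heq
    simp only [dif_pos h1, dif_pos h2] at heq
    have := e.symm.injective (Subtype.ext heq)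
    exact Fin.mk.inj_iff.mp this

lemma exists_sigma {p : ℕ} (hp : 2 ≤ p) (i₁ i₂ : Fin p) (hi : i₁ ≠ i₂) :
    ∃ σ : Fin p ≃ Fin p, σ ⟨0, by omega⟩ = i₁ ∧ σ ⟨1, by omega⟩ = i₂ := by
  set z : Fin p := ⟨0, by omega⟩
  set o : Fin p := ⟨1, by omega⟩
  have hzo : z ≠ o := by simp [z, o, Fin.ext_iff]
  set j : Fin p := Equiv.swap z i₁ i₂ with hj
  have hjz : j ≠ z := by
    intro h
    apply hi
    have := congrArg (Equiv.swap z i₁) h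
    rw [Equiv.swap_apply_self, Equiv.swap_apply_left] at this; exact this.symm
  refine ⟨(Equiv.swap o j).trans (Equiv.swap z i₁), ?_, ?_⟩
  · simp only [Equiv.trans_apply]
    rw [Equiv.swap_apply_of_ne_of_ne hzo (Ne.symm hjz), Equiv.swap_apply_left]
  · simp only [Equiv.trans_apply]
    rw [Equiv.swap_apply_left, hj, Equiv.swap_apply_self]

theorem stmt18 {n : ℕ} (c : Sym2 (Fin n) → ℕ) (L : SimpleGraph (Fin n))
    (hinj : Set.InjOn c L.edgeSet)
    (hrep : ∀ e ∈ (⊤ : SimpleGraph (Fin n)).edgeSet, ∃ e' ∈ L.edgeSet, c e = c e')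
    (p k v : ℕ) (hp : 2 ≤ p) (hk : 2 ≤ k)
    (B : Fin p → Finset (Fin n))
    (hdisj : ∀ i j, i ≠ j → Disjoint (B i) (B j))
    (hcard : ∀ i, (B i).card = 2 * v)
    (hcross : ∀ i j, i ≠ j → ∀ x ∈ B i, ∀ y ∈ B j, L.Adj x y)
    (i₁ i₂ : Fin p) (hi : i₁ ≠ i₂)
    (a b : Fin k → Fin n)
    (hmatchmem : ∀ i, a i ∈ B i₁ ∧ b i ∈ B i₁ ∧ L.Adj (a i) (b i))
    (hmatchinj : Function.Injective (Sum.elim a b))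
    {ι : Type*} {W : ι → Type*} [∀ i, Fintype (W i)] (F : ∀ i, SimpleGraph (W i))
    (hv : ∀ i, Fintype.card (W i) ≤ v)
    (i₀ : ι) (hF : Embeds (F i₀) (turanMM v p k))
    (x y : Fin n) (hx : x ∈ B i₂) (hy : y ∈ B i₂) (hxy : x ≠ y) :
    Embeds (turanMM v p k)
      ((L.deleteEdges {e : Sym2 (Fin n) | c e = c s(x, y)}) ⊔
        SimpleGraph.fromRel (fun a' b' => a' = x ∧ b' = y)) ∧
    HasRainbow c (F i₀) := by
  classical
  have hp0 : 0 < p := by omega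
  have hk0 : 0 < k := by omega
  -- basic injectivity facts
  have hainj : Function.Injective a := by
    intro i j h
    have := hmatchinj (a₁ := Sum.inl i) (a₂ := Sum.inl j) h
    simpa using this
  have hbinj : Function.Injective b := by
    intro i j h
    have := hmatchinj (a₁ := Sum.inr i) (a₂ := Sum.inr j) h
    simpa using this
  have hab : ∀ i j : Fin k, a i ≠ b j := by
    intro i j h
    have := hmatchinj (a₁ := Sum.inl i) (a₂ := Sum.inr j) h
    simpa using this
  -- k ≤ v
  have hvk : k ≤ v := by
    have hsub : ∀ s : Fin k ⊕ Fin k, Sum.elim a b s ∈ B i₁ := by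
      rintro (i | i)
      · exact (hmatchmem i).1
      · exact (hmatchmem i).2.1
    have hle := Finset.card_le_card_of_injOn (s := (Finset.univ : Finset (Fin k ⊕ Fin k)))
      (Sum.elim a b) (fun s _ => hsub s) (fun s _ t _ h => hmatchinj h)
    have huc : (Finset.univ : Finset (Fin k ⊕ Fin k)).card = k + k := by simp
    rw [huc, hcard i₁] at hle
    omega
  have hv2 : 2 ≤ v := by omega
  -- disjointness facts
  have hd12 := hdisj i₁ i₂ hi
  have hxB1 : x ∉ B i₁ := fun h => (Finset.disjoint_left.mp hd12 h) hx
  have hyB1 : y ∉ B i₁ := fun h => (Finset.disjoint_left.mp hd12 h) hy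
  have haB2 : ∀ i : Fin k, a i ∉ B i₂ := fun i h =>
    (Finset.disjoint_left.mp hd12 (hmatchmem i).1) h
  have hbB2 : ∀ i : Fin k, b i ∉ B i₂ := fun i h =>
    (Finset.disjoint_left.mp hd12 (hmatchmem i).2.1) h
  have hax : ∀ i : Fin k, a i ≠ x := fun i h => haB2 i (h ▸ hx)
  have hay : ∀ i : Fin k, a i ≠ y := fun i h => haB2 i (h ▸ hy)
  have hbx : ∀ i : Fin k, b i ≠ x := fun i h => hbB2 i (h ▸ hx)
  have hby : ∀ i : Fin k, b i ≠ y := fun i h => hbB2 i (h ▸ hy)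
  -- the set of matching vertices
  set MV : Finset (Fin n) := Finset.image a Finset.univ ∪ Finset.image b Finset.univ with hMVdef
  have hMVcard : MV.card ≤ 2 * k := by
    calc MV.card ≤ (Finset.image a Finset.univ).card + (Finset.image b Finset.univ).card :=
          Finset.card_union_le _ _
      _ ≤ k + k := by
          have h1 := Finset.card_image_le (s := (Finset.univ : Finset (Fin k))) (f := a)
          have h2 := Finset.card_image_le (s := (Finset.univ : Finset (Fin k))) (f := b)
          simp only [Finset.card_univ, Fintype.card_fin] at h1 h2
          omega
      _ = 2 * k := by omega
  have hMVmem : ∀ i : Fin k, a i ∈ MV ∧ b i ∈ MV := by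
    intro i
    constructor
    · exact Finset.mem_union_left _ (Finset.mem_image_of_mem a (Finset.mem_univ i))
    · exact Finset.mem_union_right _ (Finset.mem_image_of_mem b (Finset.mem_univ i))
  -- choose the avoid set S and dropped pair index d
  have hSd : ∃ (S : Finset (Fin n)) (d : ℕ),
      x ∉ S ∧ y ∉ S ∧ (∀ i : Fin k, (i : ℕ) ≠ d → a i ∉ S ∧ b i ∉ S) ∧
      (∀ e' ∈ L.edgeSet, c e' = c s(x, y) → e' = s(x, y) ∨ ∃ z ∈ S, z ∈ e') ∧
      S.card ≤ 2 ∧ (S.card ≤ 1 ∨ S ⊆ MV) := by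
    by_cases h : ∃ e₀ ∈ L.edgeSet, c e₀ = c s(x, y) ∧ e₀ ≠ s(x, y)
    · obtain ⟨e₀, he₀L, he₀c, he₀ne⟩ := h
      have hw : ∃ w, w ∈ e₀ ∧ w ≠ x ∧ w ≠ y := by
        revert he₀L he₀ne
        induction e₀ using Sym2.ind with | _ u₁ u₂ =>
        intro he₀L he₀ne
        have hne : u₁ ≠ u₂ := (L.mem_edgeSet.mp he₀L).ne
        by_cases h1 : u₁ ≠ x ∧ u₁ ≠ y
        · exact ⟨u₁, Sym2.mem_mk_left _ _, h1.1, h1.2⟩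
        by_cases h2 : u₂ ≠ x ∧ u₂ ≠ y
        · exact ⟨u₂, Sym2.mem_mk_right _ _, h2.1, h2.2⟩
        rw [not_and_or, not_not, not_not] at h1 h2
        exfalso
        apply he₀ne
        rw [Sym2.eq_iff]
        rcases h1 with rfl | rfl <;> rcases h2 with rfl | rfl
        · exact absurd rfl hne
        · exact Or.inl ⟨rfl, rfl⟩
        · exact Or.inr ⟨rfl, rfl⟩
        · exact absurd rfl hne
      obtain ⟨w, hwmem, hwx, hwy⟩ := hw
      have huniq : ∀ e' ∈ L.edgeSet, c e' = c s(x, y) → e' = e₀ := by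
        intro e' he' hc'
        exact hinj he' he₀L (hc'.trans he₀c.symm)
      by_cases hwm : ∃ i : Fin k, w = a i ∨ w = b i
      · obtain ⟨i, hi'⟩ := hwm
        refine ⟨{a i, b i}, (i : ℕ), ?_, ?_, ?_, ?_, ?_, ?_⟩
        · intro hmem
          rcases Finset.mem_insert.mp hmem with h' | h'
          · exact hax i h'.symm
          · exact hbx i (Finset.mem_singleton.mp h').symm
        · intro hmem
          rcases Finset.mem_insert.mp hmem with h' | h'
          · exact hay i h'.symm
          · exact hby i (Finset.mem_singleton.mp h').symm
        · intro j hj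
          constructor
          · intro hmem
            rcases Finset.mem_insert.mp hmem with h' | h'
            · exact hj (congrArg Fin.val (hainj h'))
            · exact hab j i (Finset.mem_singleton.mp h')
          · intro hmem
            rcases Finset.mem_insert.mp hmem with h' | h'
            · exact hab i j h'.symm
            · exact hj (congrArg Fin.val (hbinj (Finset.mem_singleton.mp h')))
        · intro e' he' hc'
          right
          refine ⟨w, ?_, (huniq e' he' hc') ▸ hwmem⟩
          rcases hi' with rfl | rfl
          · exact Finset.mem_insert_self _ _
          · exact Finset.mem_insert_of_mem (Finset.mem_singleton_self _)
        · have h1 := Finset.card_insert_le (a i) ({b i} : Finset (Fin n))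
          have h2 : ({b i} : Finset (Fin n)).card = 1 := Finset.card_singleton _
          omega
        · right
          intro z hz
          rcases Finset.mem_insert.mp hz with rfl | hz'
          · exact (hMVmem i).1
          · exact (Finset.mem_singleton.mp hz') ▸ (hMVmem i).2
      · refine ⟨{w}, 0, ?_, ?_, ?_, ?_, ?_, ?_⟩
        · intro hmem; exact hwx (Finset.mem_singleton.mp hmem).symm
        · intro hmem; exact hwy (Finset.mem_singleton.mp hmem).symm
        · intro j _
          constructor
          · intro hmem
            exact hwm ⟨j, Or.inl (Finset.mem_singleton.mp hmem).symm⟩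
          · intro hmem
            exact hwm ⟨j, Or.inr (Finset.mem_singleton.mp hmem).symm⟩
        · intro e' he' hc'
          exact Or.inr ⟨w, Finset.mem_singleton_self _, (huniq e' he' hc') ▸ hwmem⟩
        · simp
        · left; simp
    · refine ⟨∅, 0, by simp, by simp, by simp, ?_, by simp, by simp⟩
      intro e' he' hc'
      left
      by_contra hne
      exact h ⟨e', he', hc', hne⟩
  obtain ⟨S, d, hxS, hyS, hP3, hP1, hScard, hP5⟩ := hSd
  -- the part assignment
  obtain ⟨σ, hσ0, hσ1⟩ := exists_sigma hp i₁ i₂ hi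
  set τ : ℕ → Fin p := fun q => σ ⟨q % p, Nat.mod_lt _ hp0⟩ with hτdef
  have hτ0 : τ 0 = i₁ := by
    have h' : (⟨0 % p, Nat.mod_lt _ hp0⟩ : Fin p) = ⟨0, by omega⟩ := Fin.ext (Nat.zero_mod p)
    simp only [hτdef]
    rw [h', hσ0]
  have hτ1 : τ 1 = i₂ := by
    have h' : (⟨1 % p, Nat.mod_lt _ hp0⟩ : Fin p) = ⟨1, by omega⟩ :=
      Fin.ext (Nat.mod_eq_of_lt (by omega))
    simp only [hτdef]
    rw [h', hσ1]
  have hτinj : ∀ q₁ q₂, q₁ < p → q₂ < p → τ q₁ = τ q₂ → q₁ = q₂ := by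
    intro q₁ q₂ h1 h2 h
    have := σ.injective h
    have := Fin.mk.inj_iff.mp this
    rwa [Nat.mod_eq_of_lt h1, Nat.mod_eq_of_lt h2] at this
  -- the matching pair selector avoiding d
  set π : ℕ → ℕ := fun m => if m < d then m else m + 1 with hπdef
  have hπlt : ∀ m, m < k - 1 → π m < k := by
    intro m hm; simp only [hπdef]; split <;> omega
  have hπd : ∀ m, π m ≠ d := by
    intro m; simp only [hπdef]; split <;> omega
  have hπinj : ∀ m₁ m₂, π m₁ = π m₂ → m₁ = m₂ := by
    intro m₁ m₂; simp only [hπdef]; split <;> split <;> omega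
  -- fill functions
  set T : ℕ → Finset (Fin n) := fun q =>
    if q = 0 then B i₁ \ (S ∪ MV)
    else if q = 1 then B i₂ \ (insert x (insert y S))
    else B (τ q) \ S with hTdef
  set mc : ℕ → ℕ := fun q =>
    if q = 0 then v - 2 * (k - 1) else if q = 1 then v - 2 else v with hmcdef
  have hTcard : ∀ q, mc q ≤ (T q).card := by
    intro q
    simp only [hTdef, hmcdef]
    by_cases h0 : q = 0
    · simp only [if_pos h0]
      have h1 : (S ∪ MV).card ≤ 2 * k + 1 := by
        rcases hP5 with h | h
        · have := Finset.card_union_le S MV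
          omega
        · rw [Finset.union_eq_right.mpr h]
          omega
      have h2 := Finset.le_card_sdiff (S ∪ MV) (B i₁)
      rw [hcard i₁] at h2
      omega
    · simp only [if_neg h0]
      by_cases h1 : q = 1
      · simp only [if_pos h1]
        have hc1 : (insert x (insert y S)).card ≤ S.card + 2 :=
          (Finset.card_insert_le _ _).trans (by
            have := Finset.card_insert_le y S; omega)
        have h2 := Finset.le_card_sdiff (insert x (insert y S)) (B i₂)
        rw [hcard i₂] at h2
        omega
      · simp only [if_neg h1]
        have h2 := Finset.le_card_sdiff S (B (τ q))
        rw [hcard (τ q)] at h2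
        omega
  have hfill : ∀ q, ∃ g0 : ℕ → Fin n, (∀ t, t < mc q → g0 t ∈ T q) ∧
      ∀ t₁ t₂, t₁ < mc q → t₂ < mc q → g0 t₁ = g0 t₂ → t₁ = t₂ :=
    fun q => exists_fill x (T q) (mc q) (hTcard q)
  choose fill hfmem hfinj using hfill
  -- the vertex map
  set A : ℕ → Fin n := fun t =>
    if t % 2 = 0 then a ⟨π (t / 2) % k, Nat.mod_lt _ hk0⟩
    else b ⟨π (t / 2) % k, Nat.mod_lt _ hk0⟩ with hAdef
  set g : ℕ → ℕ → Fin n := fun q t =>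
    if q = 0 then (if t < 2 * (k - 1) then A t else fill 0 (t - 2 * (k - 1)))
    else if q = 1 then (if t = 0 then x else if t = 1 then y else fill 1 (t - 2))
    else fill q t with hgdef
  -- basic facts about T
  have hT0 : ∀ z ∈ T 0, z ∈ B i₁ ∧ z ∉ S ∧ z ∉ MV := by
    intro z hz
    simp only [hTdef, Nat.reduceEqDiff, reduceIte, Finset.mem_sdiff, Finset.mem_union, not_or] at hz
    exact ⟨hz.1, hz.2.1, hz.2.2⟩
  have hT1 : ∀ z ∈ T 1, z ∈ B i₂ ∧ z ∉ S ∧ z ≠ x ∧ z ≠ y := by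
    intro z hz
    simp only [hTdef, Nat.reduceEqDiff, reduceIte, Finset.mem_sdiff, Finset.mem_insert, not_or] at hz
    exact ⟨hz.1, hz.2.2.2, hz.2.1, hz.2.2.1⟩
  have hTq : ∀ q, q ≠ 0 → q ≠ 1 → ∀ z ∈ T q, z ∈ B (τ q) ∧ z ∉ S := by
    intro q h0 h1 z hz
    simp only [hTdef, if_neg h0, if_neg h1, Finset.mem_sdiff] at hz
    exact hz
  -- membership of g values
  have gmem : ∀ q, q < p → ∀ t, t < v → g q t ∈ B (τ q) := by
    intro q hq t ht
    by_cases h0 : q = 0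
    · subst h0
      rw [hτ0]
      simp only [hgdef, Nat.reduceEqDiff, reduceIte]
      by_cases h1 : t < 2 * (k - 1)
      · rw [if_pos h1]
        simp only [hAdef]
        split
        · exact (hmatchmem _).1
        · exact (hmatchmem _).2.1
      · rw [if_neg h1]
        have : t - 2 * (k - 1) < mc 0 := by simp only [hmcdef, Nat.reduceEqDiff, reduceIte]; omega
        exact (hT0 _ (hfmem 0 _ this)).1
    · by_cases h1 : q = 1
      · subst h1
        rw [hτ1]
        simp only [hgdef, Nat.reduceEqDiff, reduceIte]
        by_cases ht0 : t = 0
        · rw [if_pos ht0]; exact hx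
        · rw [if_neg ht0]
          by_cases ht1 : t = 1
          · rw [if_pos ht1]; exact hy
          · rw [if_neg ht1]
            have : t - 2 < mc 1 := by
              simp only [hmcdef, Nat.reduceEqDiff, reduceIte]; omega
            exact (hT1 _ (hfmem 1 _ this)).1
      · simp only [hgdef, if_neg h0, if_neg h1]
        have : t < mc q := by simp only [hmcdef, if_neg h0, if_neg h1]; omega
        exact (hTq q h0 h1 _ (hfmem q _ this)).1
  -- g values avoid S
  have gS : ∀ q, q < p → ∀ t, t < v → g q t ∉ S := by
    intro q hq t ht
    by_cases h0 : q = 0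
    · subst h0
      simp only [hgdef, Nat.reduceEqDiff, reduceIte]
      by_cases h1 : t < 2 * (k - 1)
      · rw [if_pos h1]
        simp only [hAdef]
        have hlt : π (t / 2) < k := hπlt _ (by omega)
        have hmod : π (t / 2) % k = π (t / 2) := Nat.mod_eq_of_lt hlt
        split
        · exact (hP3 _ (by simp only [hmod]; exact hπd _)).1
        · exact (hP3 _ (by simp only [hmod]; exact hπd _)).2
      · rw [if_neg h1]
        have : t - 2 * (k - 1) < mc 0 := by simp only [hmcdef, Nat.reduceEqDiff, reduceIte]; omega
        exact (hT0 _ (hfmem 0 _ this)).2.1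
    · by_cases h1 : q = 1
      · subst h1
        simp only [hgdef, Nat.reduceEqDiff, reduceIte]
        by_cases ht0 : t = 0
        · rw [if_pos ht0]; exact hxS
        · rw [if_neg ht0]
          by_cases ht1 : t = 1
          · rw [if_pos ht1]; exact hyS
          · rw [if_neg ht1]
            have : t - 2 < mc 1 := by
              simp only [hmcdef, Nat.reduceEqDiff, reduceIte]; omega
            exact (hT1 _ (hfmem 1 _ this)).2.1
      · simp only [hgdef, if_neg h0, if_neg h1]
        have : t < mc q := by simp only [hmcdef, if_neg h0, if_neg h1]; omega
        exact (hTq q h0 h1 _ (hfmem q _ this)).2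
  -- per-part injectivity of g
  have ginj : ∀ q, q < p → ∀ t₁, t₁ < v → ∀ t₂, t₂ < v → g q t₁ = g q t₂ → t₁ = t₂ := by
    intro q hq t₁ ht₁ t₂ ht₂ heq
    by_cases h0 : q = 0
    · subst h0
      simp only [hgdef, Nat.reduceEqDiff, reduceIte] at heq
      by_cases h1 : t₁ < 2 * (k - 1) <;> by_cases h2 : t₂ < 2 * (k - 1)
      · rw [if_pos h1, if_pos h2] at heq
        simp only [hAdef] at heq
        have hlt1 : π (t₁ / 2) < k := hπlt _ (by omega)
        have hlt2 : π (t₂ / 2) < k := hπlt _ (by omega)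
        by_cases p1 : t₁ % 2 = 0 <;> by_cases p2 : t₂ % 2 = 0
        · rw [if_pos p1, if_pos p2] at heq
          have := Fin.mk.inj_iff.mp (hainj heq)
          rw [Nat.mod_eq_of_lt hlt1, Nat.mod_eq_of_lt hlt2] at this
          have := hπinj _ _ this
          omega
        · rw [if_pos p1, if_neg p2] at heq
          exact absurd heq (hab _ _)
        · rw [if_neg p1, if_pos p2] at heq
          exact absurd heq.symm (hab _ _)
        · rw [if_neg p1, if_neg p2] at heq
          have := Fin.mk.inj_iff.mp (hbinj heq)
          rw [Nat.mod_eq_of_lt hlt1, Nat.mod_eq_of_lt hlt2] at this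
          have := hπinj _ _ this
          omega
      · rw [if_pos h1, if_neg h2] at heq
        exfalso
        have hm2 : t₂ - 2 * (k - 1) < mc 0 := by simp only [hmcdef, Nat.reduceEqDiff, reduceIte]; omega
        have hMV2 := (hT0 _ (hfmem 0 _ hm2)).2.2
        apply hMV2
        rw [← heq]
        simp only [hAdef]
        split
        · exact (hMVmem _).1
        · exact (hMVmem _).2
      · rw [if_neg h1, if_pos h2] at heq
        exfalso
        have hm1 : t₁ - 2 * (k - 1) < mc 0 := by simp only [hmcdef, Nat.reduceEqDiff, reduceIte]; omega
        have hMV1 := (hT0 _ (hfmem 0 _ hm1)).2.2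
        apply hMV1
        rw [heq]
        simp only [hAdef]
        split
        · exact (hMVmem _).1
        · exact (hMVmem _).2
      · rw [if_neg h1, if_neg h2] at heq
        have hm1 : t₁ - 2 * (k - 1) < mc 0 := by simp only [hmcdef, Nat.reduceEqDiff, reduceIte]; omega
        have hm2 : t₂ - 2 * (k - 1) < mc 0 := by simp only [hmcdef, Nat.reduceEqDiff, reduceIte]; omega
        have := hfinj 0 _ _ hm1 hm2 heq
        omega
    · by_cases h1 : q = 1
      · subst h1
        simp only [hgdef, Nat.reduceEqDiff, reduceIte] at heq
        have hm : ∀ t, t ≠ 0 → t ≠ 1 → t < v → t - 2 < mc 1 := by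
          intro t h0' h1' ht
          simp only [hmcdef, Nat.reduceEqDiff, reduceIte]; omega
        by_cases a1 : t₁ = 0 <;> by_cases a2 : t₂ = 0
        · omega
        · rw [if_pos a1, if_neg a2] at heq
          by_cases b2 : t₂ = 1
          · rw [if_pos b2] at heq; exact absurd heq hxy
          · rw [if_neg b2] at heq
            exact absurd heq.symm (hT1 _ (hfmem 1 _ (hm t₂ a2 b2 ht₂))).2.2.1
        · rw [if_neg a1, if_pos a2] at heq
          by_cases b1 : t₁ = 1
          · rw [if_pos b1] at heq; exact absurd heq.symm hxy
          · rw [if_neg b1] at heq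
            exact absurd heq (hT1 _ (hfmem 1 _ (hm t₁ a1 b1 ht₁))).2.2.1
        · rw [if_neg a1, if_neg a2] at heq
          by_cases b1 : t₁ = 1 <;> by_cases b2 : t₂ = 1
          · omega
          · rw [if_pos b1, if_neg b2] at heq
            exact absurd heq.symm (hT1 _ (hfmem 1 _ (hm t₂ a2 b2 ht₂))).2.2.2
          · rw [if_neg b1, if_pos b2] at heq
            exact absurd heq (hT1 _ (hfmem 1 _ (hm t₁ a1 b1 ht₁))).2.2.2
          · rw [if_neg b1, if_neg b2] at heq
            have := hfinj 1 _ _ (hm t₁ a1 b1 ht₁) (hm t₂ a2 b2 ht₂) heq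
            omega
      · simp only [hgdef, if_neg h0, if_neg h1] at heq
        have hm : ∀ t, t < v → t < mc q := by
          intro t ht; simp only [hmcdef, if_neg h0, if_neg h1]; omega
        exact hfinj q _ _ (hm t₁ ht₁) (hm t₂ ht₂) heq
  -- the full map
  set f₀ : Fin (v * p) → Fin n := fun u => g ((u : ℕ) % p) ((u : ℕ) / p) with hf₀def
  have hqlt : ∀ u : Fin (v * p), (u : ℕ) % p < p := fun u => Nat.mod_lt _ hp0
  have htlt : ∀ u : Fin (v * p), (u : ℕ) / p < v := by
    intro u
    rw [Nat.div_lt_iff_lt_mul hp0]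
    exact u.2
  have hf₀mem : ∀ u : Fin (v * p), f₀ u ∈ B (τ ((u : ℕ) % p)) :=
    fun u => gmem _ (hqlt u) _ (htlt u)
  have hf₀inj : Function.Injective f₀ := by
    intro u₁ u₂ h
    simp only [hf₀def] at h
    by_cases hq : (u₁ : ℕ) % p = (u₂ : ℕ) % p
    · rw [hq] at h
      have htdiv := ginj _ (hqlt u₂) _ (htlt u₁) _ (htlt u₂) h
      apply Fin.ext
      rw [← Nat.div_add_mod (u₁ : ℕ) p, ← Nat.div_add_mod (u₂ : ℕ) p, htdiv, hq]
    · exfalso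
      have hτne : τ ((u₁ : ℕ) % p) ≠ τ ((u₂ : ℕ) % p) :=
        fun h' => hq (hτinj _ _ (hqlt u₁) (hqlt u₂) h')
      have h1 := gmem _ (hqlt u₁) _ (htlt u₁)
      have h2 := gmem _ (hqlt u₂) _ (htlt u₂)
      rw [h] at h1
      exact (Finset.disjoint_left.mp (hdisj _ _ hτne) h1) h2
  -- the target graph
  set L' : SimpleGraph (Fin n) :=
    (L.deleteEdges {e : Sym2 (Fin n) | c e = c s(x, y)}) ⊔
      SimpleGraph.fromRel (fun a' b' => a' = x ∧ b' = y) with hL'def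
  -- surviving L-edges give L'-edges
  have hkeep : ∀ z₁ z₂ : Fin n, L.Adj z₁ z₂ → z₁ ∉ S → z₂ ∉ S →
      (z₁ ∈ B i₂ → z₂ ∈ B i₂ → False) → L'.Adj z₁ z₂ := by
    intro z₁ z₂ hLadj hz₁ hz₂ hnotboth
    rw [hL'def, SimpleGraph.sup_adj]
    left
    rw [SimpleGraph.deleteEdges_adj]
    refine ⟨hLadj, ?_⟩
    intro hcol
    rw [Set.mem_setOf_eq] at hcol
    rcases hP1 _ (L.mem_edgeSet.mpr hLadj) hcol with heq | ⟨z, hzS, hze⟩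
    · rw [Sym2.eq_iff] at heq
      rcases heq with ⟨rfl, rfl⟩ | ⟨rfl, rfl⟩
      · exact hnotboth hx hy
      · exact hnotboth hy hx
    · rcases Sym2.mem_iff.mp hze with rfl | rfl
      · exact hz₁ hzS
      · exact hz₂ hzS
  -- main adjacency claim
  have hAdj : ∀ u₁ u₂ : Fin (v * p), u₁ ≠ u₂ →
      (((u₁ : ℕ) % p ≠ (u₂ : ℕ) % p)
        ∨ ((u₁ : ℕ) % p = 0 ∧ (u₂ : ℕ) % p = 0 ∧
            (u₁ : ℕ) / p / 2 = (u₂ : ℕ) / p / 2 ∧ (u₁ : ℕ) / p < 2 * (k - 1))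
        ∨ ((u₁ : ℕ) % p = 1 ∧ (u₂ : ℕ) % p = 1 ∧ (u₁ : ℕ) / p < 2 ∧ (u₂ : ℕ) / p < 2)) →
      L'.Adj (f₀ u₁) (f₀ u₂) := by
    intro u₁ u₂ hne hrel
    have ht₁ := htlt u₁
    have ht₂ := htlt u₂
    have hq₁ := hqlt u₁
    have hq₂ := hqlt u₂
    rcases hrel with hcr | hm | hpart1
    · -- cross edges
      have hτne : τ ((u₁ : ℕ) % p) ≠ τ ((u₂ : ℕ) % p) :=
        fun h' => hcr (hτinj _ _ hq₁ hq₂ h')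
      have hLadj : L.Adj (f₀ u₁) (f₀ u₂) :=
        hcross _ _ hτne _ (hf₀mem u₁) _ (hf₀mem u₂)
      apply hkeep _ _ hLadj (gS _ hq₁ _ ht₁) (gS _ hq₂ _ ht₂)
      intro hb1 hb2
      have hmem1 := hf₀mem u₁
      have hmem2 := hf₀mem u₂
      have e1 : τ ((u₁ : ℕ) % p) = i₂ := by
        by_contra hne'
        exact (Finset.disjoint_left.mp (hdisj _ _ hne') hmem1) hb1
      have e2 : τ ((u₂ : ℕ) % p) = i₂ := by
        by_contra hne'
        exact (Finset.disjoint_left.mp (hdisj _ _ hne') hmem2) hb2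
      exact hτne (e1.trans e2.symm)
    · -- matching edge in part 0
      obtain ⟨hm1, hm2, hmdiv, hmlt⟩ := hm
      obtain ⟨t₁, ht₁d⟩ : ∃ t, (u₁ : ℕ) / p = t := ⟨_, rfl⟩
      obtain ⟨t₂, ht₂d⟩ : ∃ t, (u₂ : ℕ) / p = t := ⟨_, rfl⟩
      rw [ht₁d] at hmdiv hmlt ht₁
      rw [ht₂d] at hmdiv ht₂
      have htne : t₁ ≠ t₂ := by
        intro h
        apply hne
        apply Fin.ext
        rw [← Nat.div_add_mod (u₁ : ℕ) p, ← Nat.div_add_mod (u₂ : ℕ) p,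
          ht₁d, ht₂d, h, hm1, hm2]
      have ht₂lt : t₂ < 2 * (k - 1) := by omega
      have hg1 : f₀ u₁ = A t₁ := by
        simp only [hf₀def, hgdef, hm1, ht₁d, Nat.reduceEqDiff, reduceIte, if_pos hmlt]
      have hg2 : f₀ u₂ = A t₂ := by
        simp only [hf₀def, hgdef, hm2, ht₂d, Nat.reduceEqDiff, reduceIte, if_pos ht₂lt]
      have hlt : π (t₁ / 2) < k := hπlt _ (by omega)
      set i : Fin k := ⟨π (t₁ / 2) % k, Nat.mod_lt _ hk0⟩ with hidef
      have hival : (i : ℕ) = π (t₁ / 2) := Nat.mod_eq_of_lt hlt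
      have hiS := hP3 i (by rw [hival]; exact hπd _)
      have hgood : L'.Adj (a i) (b i) := by
        apply hkeep _ _ (hmatchmem i).2.2 hiS.1 hiS.2
        intro hb1 _
        exact haB2 i hb1
      by_cases hpar : t₁ % 2 = 0
      · have hpar2 : t₂ % 2 ≠ 0 := by omega
        have hA1 : A t₁ = a i := by simp only [hAdef, if_pos hpar, hidef]
        have hA2 : A t₂ = b i := by
          simp only [hAdef, if_neg hpar2, ← hmdiv, hidef]
        rw [hg1, hg2, hA1, hA2]
        exact hgood
      · have hpar2 : t₂ % 2 = 0 := by omega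
        have hA1 : A t₁ = b i := by simp only [hAdef, if_neg hpar, hidef]
        have hA2 : A t₂ = a i := by
          simp only [hAdef, if_pos hpar2, ← hmdiv, hidef]
        rw [hg1, hg2, hA1, hA2]
        exact hgood.symm
    · -- the edge inside part 1
      obtain ⟨hm1, hm2, hl1, hl2⟩ := hpart1
      obtain ⟨t₁, ht₁d⟩ : ∃ t, (u₁ : ℕ) / p = t := ⟨_, rfl⟩
      obtain ⟨t₂, ht₂d⟩ : ∃ t, (u₂ : ℕ) / p = t := ⟨_, rfl⟩
      rw [ht₁d] at hl1
      rw [ht₂d] at hl2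
      have htne : t₁ ≠ t₂ := by
        intro h
        apply hne
        apply Fin.ext
        rw [← Nat.div_add_mod (u₁ : ℕ) p, ← Nat.div_add_mod (u₂ : ℕ) p,
          ht₁d, ht₂d, h, hm1, hm2]
      have hxyadj : L'.Adj x y := by
        rw [hL'def, SimpleGraph.sup_adj]
        right
        rw [SimpleGraph.fromRel_adj]
        exact ⟨hxy, Or.inl ⟨rfl, rfl⟩⟩
      by_cases h10 : t₁ = 0
      · have h21 : t₂ = 1 := by omega
        have hg1 : f₀ u₁ = x := by
          simp only [hf₀def, hgdef, hm1, ht₁d, h10, Nat.reduceEqDiff, reduceIte]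
        have hg2 : f₀ u₂ = y := by
          simp only [hf₀def, hgdef, hm2, ht₂d, h21, Nat.reduceEqDiff, reduceIte]
        rw [hg1, hg2]
        exact hxyadj
      · have h11 : t₁ = 1 := by omega
        have h20 : t₂ = 0 := by omega
        have hg1 : f₀ u₁ = y := by
          simp only [hf₀def, hgdef, hm1, ht₁d, h11, Nat.reduceEqDiff, reduceIte]
        have hg2 : f₀ u₂ = x := by
          simp only [hf₀def, hgdef, hm2, ht₂d, h20, Nat.reduceEqDiff, reduceIte]
        rw [hg1, hg2]
        exact hxyadj.symm
  have hEmb : Embeds (turanMM v p k) L' := by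
    refine ⟨⟨f₀, hf₀inj⟩, ?_⟩
    intro u₁ u₂ h
    rw [turanMM, SimpleGraph.fromRel_adj] at h
    obtain ⟨hne, h⟩ := h
    rcases h with h | h
    · exact hAdj u₁ u₂ hne h
    · exact (hAdj u₂ u₁ (Ne.symm hne) h).symm
  refine ⟨hEmb, ?_⟩
  -- rainbow part
  have hedge : ∀ e' ∈ L'.edgeSet, e' = s(x, y) ∨ (e' ∈ L.edgeSet ∧ c e' ≠ c s(x, y)) := by
    intro e'
    induction e' using Sym2.ind with | _ u w =>
    intro he'
    rw [L'.mem_edgeSet, hL'def, SimpleGraph.sup_adj] at he'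
    rcases he' with h | h
    · rw [SimpleGraph.deleteEdges_adj] at h
      exact Or.inr ⟨L.mem_edgeSet.mpr h.1, h.2⟩
    · rw [SimpleGraph.fromRel_adj] at h
      left
      rcases h.2 with ⟨rfl, rfl⟩ | ⟨rfl, rfl⟩
      · rfl
      · exact Sym2.eq_swap
  have hinj' : Set.InjOn c L'.edgeSet := by
    intro e₁ h1 e₂ h2 hc'
    rcases hedge e₁ h1 with rfl | ⟨hL1, hc1⟩ <;> rcases hedge e₂ h2 with rfl | ⟨hL2, hc2⟩
    · rfl
    · exact absurd hc'.symm hc2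
    · exact absurd hc' hc1
    · exact hinj hL1 hL2 hc'
  obtain ⟨f, hf⟩ := hEmb
  obtain ⟨e, he⟩ := hF
  refine ⟨e.trans f, ?_⟩
  intro a' b' a'' b'' hab1 hab2 hc'
  have m1 : s(f (e a'), f (e b')) ∈ L'.edgeSet :=
    L'.mem_edgeSet.mpr (hf _ _ (he _ _ hab1))
  have m2 : s(f (e a''), f (e b'')) ∈ L'.edgeSet :=
    L'.mem_edgeSet.mpr (hf _ _ (he _ _ hab2))
  have h12 := hinj' m1 m2 hc'
  have hfe : Function.Injective (fun z => f (e z)) :=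
    fun z₁ z₂ h => e.injective (f.injective h)
  rw [Sym2.eq_iff] at h12 ⊢
  rcases h12 with ⟨ha', hb'⟩ | ⟨ha', hb'⟩
  · exact Or.inl ⟨hfe ha', hfe hb'⟩
  · exact Or.inr ⟨hfe ha', hfe hb'⟩
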